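/- Let 0 < a < b be reals, α ∈ (0,1), and x : [a,b] → ℝ of class C². For each positive integer n set ΔT = ln(b/a)/n and t_k = a·exp(k·ΔT). Then the discrete approximation converges uniformly to the Hadamard derivative as n → ∞: for every ε > 0 there exists n₀ such that for all n ≥ n₀ and all N ∈ {1,…,n}, | ₐD_{t_N}^α x − (x(a)/Γ(1−α))·(ln(t_N/a))^{−α} − ψ·∑_{k=1}^{N} ω_{N−k+1}^α · ((x(t_k) − x(t_{k−1}))/exp(k·ΔT))·t_k | < ε, where ψ = (ΔT)^{1−α}/(a·(1−exp(−ΔT))·Γ(2−α)) and ω_k^α = k^{1−α} − (k−1)^{1−α}. -/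

import Mathlib

open Real Set intervalIntegral

open MeasureTheory in
private lemma had_integrable {a T αv M' : ℝ} (ha : 0 < a) (haT : a < T)
    (hα0 : 0 < αv) (hα1 : αv < 1) {ρ : ℝ → ℝ}
    (hρm : AEStronglyMeasurable ρ (volume.restrict (Set.Ioc a T)))
    (hρb : ∀ τ ∈ Set.Ioc a T, |ρ τ| ≤ M') :
    IntervalIntegrable (fun τ => Real.log (T / τ) ^ (-αv) * ρ τ) volume a T := by
  have hT0 : 0 < T := lt_trans ha haT
  have hM' : 0 ≤ M' := le_trans (abs_nonneg _) (hρb T ⟨haT, le_rfl⟩)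
  rw [intervalIntegrable_iff_integrableOn_Ioc_of_le haT.le]
  have hdom : IntegrableOn (fun τ => (M' * T ^ αv) * (T - τ) ^ (-αv)) (Set.Ioc a T) volume := by
    have h0 : IntervalIntegrable (fun s : ℝ => s ^ (-αv)) volume 0 (T - a) :=
      intervalIntegral.intervalIntegrable_rpow' (by linarith)
    have h1 := h0.comp_sub_left T
    simp only [sub_zero, sub_sub_cancel] at h1
    have h2 := (h1.symm.const_mul (M' * T ^ αv))
    rw [intervalIntegrable_iff_integrableOn_Ioc_of_le haT.le] at h2
    exact h2
  apply hdom.mono'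
  · exact (((Real.measurable_log.comp
      (measurable_const.div measurable_id)).pow_const (-αv)).aestronglyMeasurable).mul hρm
  · rw [ae_restrict_iff' measurableSet_Ioc]
    filter_upwards with τ hτ
    have hτ0 : 0 < τ := lt_trans ha hτ.1
    rcases eq_or_lt_of_le hτ.2 with hEq | hlt
    · subst hEq
      simp only [div_self (ne_of_gt hT0), Real.log_one, sub_self,
        Real.zero_rpow (show -αv ≠ 0 by linarith), zero_mul, mul_zero, norm_zero]
      exact le_rfl
    · have hlog : (T - τ) / T ≤ Real.log (T / τ) := by
        have h := Real.log_le_sub_one_of_pos (show 0 < τ / T from div_pos hτ0 hT0)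
        rw [Real.log_div (ne_of_gt hτ0) (ne_of_gt hT0)] at h
        rw [Real.log_div (ne_of_gt hT0) (ne_of_gt hτ0)]
        have h2 : (T - τ) / T = 1 - τ / T := by field_simp
        rw [h2]; linarith
      have hfrac : 0 < (T - τ) / T := div_pos (by linarith) hT0
      have key : Real.log (T / τ) ^ (-αv) ≤ ((T - τ) / T) ^ (-αv) :=
        Real.rpow_le_rpow_of_nonpos hfrac hlog (by linarith)
      have heq : ((T - τ) / T) ^ (-αv) = T ^ αv * (T - τ) ^ (-αv) := by
        rw [Real.div_rpow (by linarith) hT0.le, Real.rpow_neg hT0.le, div_eq_mul_inv, inv_inv, mul_comm]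
      have hlognn : 0 ≤ Real.log (T / τ) := le_trans hfrac.le hlog
      have hfnn : 0 ≤ Real.log (T / τ) ^ (-αv) := Real.rpow_nonneg hlognn _
      rw [Real.norm_eq_abs, abs_mul, abs_of_nonneg hfnn]
      calc Real.log (T / τ) ^ (-αv) * |ρ τ|
          ≤ ((T - τ) / T) ^ (-αv) * M' :=
            mul_le_mul key (hρb τ hτ) (abs_nonneg _) (Real.rpow_nonneg hfrac.le _)
        _ = M' * T ^ αv * (T - τ) ^ (-αv) := by rw [heq]; ring

open MeasureTheory in
private lemma had_ftc {a T αv c d : ℝ} (ha : 0 < a) (haT : a < T)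
    (hα0 : 0 < αv) (hα1 : αv < 1) (hac : a ≤ c) (hcd : c < d) (hdT : d ≤ T) :
    ∫ τ in c..d, Real.log (T / τ) ^ (-αv) * τ⁻¹
      = (Real.log (T / c) ^ (1 - αv) - Real.log (T / d) ^ (1 - αv)) / (1 - αv) := by
  have hT0 : 0 < T := lt_trans ha haT
  have hc0 : 0 < c := lt_of_lt_of_le ha hac
  set F : ℝ → ℝ := fun τ => -(Real.log (T / τ) ^ (1 - αv) / (1 - αv)) with hF
  have hcont : ContinuousOn F (Set.Icc c d) := by
    apply ContinuousOn.neg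
    apply ContinuousOn.div_const
    apply ContinuousOn.rpow_const
    · apply ContinuousOn.log
      · exact continuousOn_const.div continuousOn_id
          (fun τ hτ => ne_of_gt (lt_of_lt_of_le hc0 hτ.1))
      · intro τ hτ; exact ne_of_gt (div_pos hT0 (lt_of_lt_of_le hc0 hτ.1))
    · intro τ hτ; exact Or.inr (by linarith)
  have hderiv : ∀ τ ∈ Set.Ioo c d,
      HasDerivWithinAt F (Real.log (T / τ) ^ (-αv) * τ⁻¹) (Set.Ioi τ) τ := by
    intro τ hτ
    have hτ0 : 0 < τ := lt_trans hc0 hτ.1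
    have hτT : τ < T := lt_of_lt_of_le hτ.2 hdT
    have hlogpos : 0 < Real.log (T / τ) := Real.log_pos ((one_lt_div hτ0).2 hτT)
    have h1 : HasDerivAt (fun s : ℝ => Real.log (T / s)) (-τ⁻¹) τ := by
      have h0 : HasDerivAt (fun s : ℝ => Real.log T - Real.log s) (-τ⁻¹) τ := by
        simpa using (Real.hasDerivAt_log (ne_of_gt hτ0)).const_sub (Real.log T)
      apply h0.congr_of_eventuallyEq
      filter_upwards [eventually_gt_nhds hτ0] with s hs
      rw [Real.log_div (ne_of_gt hT0) (ne_of_gt hs)]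
    have h2 := h1.rpow_const (p := 1 - αv) (Or.inl (ne_of_gt hlogpos))
    have h3 := (h2.div_const (1 - αv)).neg
    have hne : (1:ℝ) - αv ≠ 0 := by linarith
    have he : (1 : ℝ) - αv - 1 = -αv := by ring
    have heq : -(-τ⁻¹ * (1 - αv) * Real.log (T / τ) ^ (1 - αv - 1) / (1 - αv))
        = Real.log (T / τ) ^ (-αv) * τ⁻¹ := by
      rw [he, show -τ⁻¹ * (1 - αv) * Real.log (T / τ) ^ (-αv)
          = -τ⁻¹ * Real.log (T / τ) ^ (-αv) * (1 - αv) by ring,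
        mul_div_cancel_right₀ _ hne]
      ring
    rw [heq] at h3
    exact h3.hasDerivWithinAt
  have hint : IntervalIntegrable (fun τ => Real.log (T / τ) ^ (-αv) * τ⁻¹) volume c d := by
    have hb : ∀ τ ∈ Set.Ioc a T, |(τ:ℝ)⁻¹| ≤ a⁻¹ := by
      intro τ hτ
      have hτ0 : 0 < τ := lt_trans ha hτ.1
      rw [abs_inv, abs_of_pos hτ0]
      exact inv_anti₀ ha hτ.1.le
    have h := had_integrable ha haT hα0 hα1 (ρ := fun τ => τ⁻¹)
      measurable_inv.aestronglyMeasurable hb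
    apply h.mono_set
    rw [Set.uIcc_of_le hcd.le, Set.uIcc_of_le haT.le]
    exact Set.Icc_subset_Icc hac hdT
  rw [intervalIntegral.integral_eq_sub_of_hasDeriv_right_of_le hcd.le hcont hderiv hint]
  show -(Real.log (T / d) ^ (1 - αv) / (1 - αv)) - -(Real.log (T / c) ^ (1 - αv) / (1 - αv)) = _
  ring

private lemma sum_Icc_one_eq_range (g : ℕ → ℝ) (N : ℕ) :
    ∑ k ∈ Finset.Icc 1 N, g k = ∑ i ∈ Finset.range N, g (i + 1) := by
  induction N with
  | zero => simp
  | succ N ih =>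
      rw [Finset.sum_Icc_succ_top (by omega : 1 ≤ N + 1), ih, Finset.sum_range_succ]

set_option maxHeartbeats 2000000 in
open MeasureTheory in
theorem hadamard_discretization_uniform_convergence
    (a b α : ℝ) (ha : 0 < a) (hab : a < b) (hα : α ∈ Set.Ioo (0 : ℝ) 1)
    (x x' x'' : ℝ → ℝ)
    (hx' : ∀ τ ∈ Set.Icc a b, HasDerivWithinAt x (x' τ) (Set.Icc a b) τ)
    (hx'' : ∀ τ ∈ Set.Icc a b, HasDerivWithinAt x' (x'' τ) (Set.Icc a b) τ)
    (hx''cont : ContinuousOn x'' (Set.Icc a b)) :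
    ∀ ε > (0 : ℝ), ∃ n₀ : ℕ, ∀ n : ℕ, n₀ ≤ n → ∀ N : ℕ, 1 ≤ N → N ≤ n →
      let ΔT : ℝ := Real.log (b / a) / n
      let t : ℕ → ℝ := fun k => a * Real.exp (k * ΔT)
      let ψ : ℝ := ΔT ^ (1 - α) / (a * (1 - Real.exp (-ΔT)) * Real.Gamma (2 - α))
      let ω : ℕ → ℝ := fun k => (k : ℝ) ^ (1 - α) - ((k : ℝ) - 1) ^ (1 - α)
      -- the left Hadamard fractional derivative of `x` at `t_N`
      let D : ℝ := x a / Real.Gamma (1 - α) * Real.log (t N / a) ^ (-α)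
        + (1 / Real.Gamma (1 - α)) * ∫ τ in a..(t N), Real.log (t N / τ) ^ (-α) * x' τ
      |D - x a / Real.Gamma (1 - α) * Real.log (t N / a) ^ (-α)
          - ψ * ∑ k ∈ Finset.Icc 1 N,
              ω (N - k + 1) * ((x (t k) - x (t (k - 1))) / Real.exp (k * ΔT)) * t k|
        < ε := by
  obtain ⟨hα0, hα1⟩ := hα
  intro ε hε
  have hb0 : 0 < b := lt_trans ha hab
  -- continuity and bounds
  have hx'c : ContinuousOn x' (Set.Icc a b) := fun τ hτ => (hx'' τ hτ).continuousWithinAt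
  have hxc : ContinuousOn x (Set.Icc a b) := fun τ hτ => (hx' τ hτ).continuousWithinAt
  obtain ⟨M₁, hM₁⟩ := (isCompact_Icc (a := a) (b := b)).exists_bound_of_continuousOn hx'c
  obtain ⟨M₂, hM₂⟩ := (isCompact_Icc (a := a) (b := b)).exists_bound_of_continuousOn hx''cont
  set M : ℝ := max (max M₁ M₂) 0 with hMdef
  have hM0 : 0 ≤ M := le_max_right _ _
  have hMx' : ∀ τ ∈ Set.Icc a b, |x' τ| ≤ M := fun τ hτ => by
    have := hM₁ τ hτ; rw [Real.norm_eq_abs] at this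
    exact le_trans this (le_max_of_le_left (le_max_left _ _))
  have hMx'' : ∀ τ ∈ Set.Icc a b, |x'' τ| ≤ M := fun τ hτ => by
    have := hM₂ τ hτ; rw [Real.norm_eq_abs] at this
    exact le_trans this (le_max_of_le_left (le_max_right _ _))
  set L : ℝ := Real.log (b / a) with hLdef
  have hL : 0 < L := Real.log_pos ((one_lt_div ha).2 hab)
  have h1α : (0:ℝ) < 1 - α := by linarith
  have hΓ : 0 < Real.Gamma (1 - α) := Real.Gamma_pos_of_pos h1α
  set C : ℝ := ((M + b * M) + M) * b with hCdef
  have hC0 : 0 ≤ C := by positivity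
  set K : ℝ := C * L ^ (1 - α) / ((1 - α) * Real.Gamma (1 - α)) with hKdef
  have hK0 : 0 ≤ K := by positivity
  obtain ⟨n₀', hn₀'⟩ := exists_nat_gt (K * L / ε)
  refine ⟨max n₀' 1, ?_⟩
  intro n hn N hN1 hNn
  have hn1 : 1 ≤ n := le_trans (le_max_right n₀' 1) hn
  have hn0R : (0:ℝ) < n := by exact_mod_cast hn1
  have hfin : K * (L / n) < ε := by
    rw [show K * (L / n) = K * L / n by ring, div_lt_iff₀ hn0R]
    have h1 : K * L / ε < (n : ℝ) :=
      lt_of_lt_of_le hn₀' (by exact_mod_cast le_trans (le_max_left n₀' 1) hn)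
    calc K * L = K * L / ε * ε := by field_simp
    _ < ε * n := by nlinarith
  intro ΔT t ψ ω D
  have hωdef : ∀ m : ℕ, ω m = (m : ℝ) ^ (1 - α) - ((m : ℝ) - 1) ^ (1 - α) := fun m => rfl
  have hψdef : ψ = ΔT ^ (1 - α) / (a * (1 - Real.exp (-ΔT)) * Real.Gamma (2 - α)) := rfl
  have hDdef : D = x a / Real.Gamma (1 - α) * Real.log (t N / a) ^ (-α)
      + (1 / Real.Gamma (1 - α)) * ∫ τ in a..(t N), Real.log (t N / τ) ^ (-α) * x' τ := rfl
  have ht : ∀ k : ℕ, t k = a * Real.exp (k * ΔT) := fun k => rfl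
  have hΔTdef : ΔT = L / n := rfl
  have hΔT : 0 < ΔT := div_pos hL hn0R
  have htpos : ∀ k : ℕ, 0 < t k := fun k => mul_pos ha (Real.exp_pos _)
  have ht0 : t 0 = a := by rw [ht]; simp
  have hnΔT : (n : ℝ) * ΔT = L := by rw [hΔTdef]; field_simp
  have hmono : ∀ j k : ℕ, j ≤ k → t j ≤ t k := by
    intro j k hjk
    rw [ht, ht]
    exact mul_le_mul_of_nonneg_left (Real.exp_le_exp.2
      (mul_le_mul_of_nonneg_right (by exact_mod_cast hjk) hΔT.le)) ha.le
  have hsmono : ∀ j k : ℕ, j < k → t j < t k := by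
    intro j k hjk
    rw [ht, ht]
    exact mul_lt_mul_of_pos_left (Real.exp_lt_exp.2
      (mul_lt_mul_of_pos_right (by exact_mod_cast hjk) hΔT)) ha
  have htn_le : ∀ k : ℕ, k ≤ n → t k ≤ b := by
    intro k hk
    have h1 : (k:ℝ) * ΔT ≤ L := by
      rw [← hnΔT]
      exact mul_le_mul_of_nonneg_right (by exact_mod_cast hk) hΔT.le
    calc t k = a * Real.exp (k * ΔT) := ht k
    _ ≤ a * Real.exp L := mul_le_mul_of_nonneg_left (Real.exp_le_exp.2 h1) ha.le
    _ = a * (b / a) := by rw [hLdef, Real.exp_log (div_pos hb0 ha)]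
    _ = b := by field_simp
  have haT : a < t N := by
    have := hsmono 0 N hN1
    rwa [ht0] at this
  have htNb : t N ≤ b := htn_le N hNn
  have hlogT : ∀ j k : ℕ, Real.log (t k / t j) = ((k : ℝ) - j) * ΔT := by
    intro j k
    rw [ht, ht, mul_div_mul_left _ _ (ne_of_gt ha), ← Real.exp_sub,
      show (k:ℝ) * ΔT - j * ΔT = ((k:ℝ) - j) * ΔT by ring, Real.log_exp]
  have hlogNa : Real.log (t N / a) = (N:ℝ) * ΔT := by
    have := hlogT 0 N; rw [ht0] at this; simpa using this
  -- integrability facts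
  have hIntAll : IntervalIntegrable (fun τ => Real.log (t N / τ) ^ (-α) * x' τ) volume a (t N) := by
    apply had_integrable (M' := M) ha haT hα0 hα1
    · exact (hx'c.aestronglyMeasurable measurableSet_Icc).mono_measure
        (Measure.restrict_mono (show Set.Ioc a (t N) ⊆ Set.Icc a b from
          fun τ hτ => ⟨le_of_lt hτ.1, le_trans hτ.2 htNb⟩) le_rfl)
    · exact fun τ hτ => hMx' τ ⟨le_of_lt hτ.1, le_trans hτ.2 htNb⟩
  have hIntInv : IntervalIntegrable (fun τ => Real.log (t N / τ) ^ (-α) * τ⁻¹) volume a (t N) := by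
    apply had_integrable (M' := a⁻¹) ha haT hα0 hα1 measurable_inv.aestronglyMeasurable
    intro τ hτ
    have hτ0 : 0 < τ := lt_trans ha hτ.1
    rw [abs_inv, abs_of_pos hτ0]
    exact inv_anti₀ ha hτ.1.le
  have hsubIcc : ∀ k : ℕ, 1 ≤ k → k ≤ N → Set.Icc (t (k-1)) (t k) ⊆ Set.Icc a b := by
    intro k hk1 hkN τ hτ
    constructor
    · calc a = t 0 := ht0.symm
      _ ≤ t (k-1) := hmono 0 (k-1) (Nat.zero_le _)
      _ ≤ τ := hτ.1
    · exact le_trans hτ.2 (htn_le k (le_trans hkN hNn))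
  have huIcc : ∀ k : ℕ, 1 ≤ k → k ≤ N → Set.uIcc (t (k-1)) (t k) ⊆ Set.uIcc a (t N) := by
    intro k hk1 hkN
    rw [Set.uIcc_of_le (hmono (k-1) k (Nat.sub_le _ _)), Set.uIcc_of_le haT.le]
    apply Set.Icc_subset_Icc
    · calc a = t 0 := ht0.symm
      _ ≤ t (k-1) := hmono 0 (k-1) (Nat.zero_le _)
    · exact hmono k N hkN
  -- the key pointwise estimate
  have hexp1 : Real.exp (-ΔT) < 1 := by
    rw [show (1:ℝ) = Real.exp 0 from (Real.exp_zero).symm]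
    exact Real.exp_lt_exp.2 (by linarith)
  have hexpne : (1:ℝ) - Real.exp (-ΔT) ≠ 0 := ne_of_gt (by linarith)
  have htk_sub : ∀ k : ℕ, 1 ≤ k → t k - t (k-1) = t k * (1 - Real.exp (-ΔT)) := by
    intro k hk1
    have hcast : ((k - 1 : ℕ) : ℝ) = (k : ℝ) - 1 := by
      rw [Nat.cast_sub hk1]; norm_num
    rw [ht, ht, hcast, show ((k:ℝ) - 1) * ΔT = k * ΔT + (-ΔT) by ring, Real.exp_add]
    ring
  have hdiff_le : ∀ k : ℕ, 1 ≤ k → k ≤ N → t k - t (k-1) ≤ b * ΔT := by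
    intro k hk1 hkN
    rw [htk_sub k hk1]
    have h1 : 1 - Real.exp (-ΔT) ≤ ΔT := by
      have := Real.add_one_le_exp (-ΔT); linarith
    exact mul_le_mul (htn_le k (le_trans hkN hNn)) h1 (by linarith) hb0.le
  have hφ : ∀ τ σ : ℝ, τ ∈ Set.Icc a b → σ ∈ Set.Icc a b →
      |τ * x' τ - σ * x' σ| ≤ (M + b * M) * |τ - σ| := by
    intro τ σ hτ hσ
    have h := (convex_Icc a b).norm_image_sub_le_of_norm_hasDerivWithin_le
      (f := fun s => s * x' s) (f' := fun s => x' s + s * x'' s)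
      (fun s hs => by
        have h := (hasDerivWithinAt_id s (Set.Icc a b)).mul (hx'' s hs)
        simp only [one_mul, id_eq] at h
        exact h)
      (fun s hs => by
        have hs' : |s| ≤ b := by
          rw [abs_of_pos (lt_of_lt_of_le ha hs.1)]; exact hs.2
        rw [Real.norm_eq_abs]
        calc |x' s + s * x'' s| ≤ |x' s| + |s| * |x'' s| := by
              rw [← abs_mul]; exact abs_add_le _ _
        _ ≤ M + b * M := add_le_add (hMx' s hs)
            (mul_le_mul hs' (hMx'' s hs) (abs_nonneg _) hb0.le)) hσ hτ
    simpa [Real.norm_eq_abs] using h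
  have hkey : ∀ k : ℕ, 1 ≤ k → k ≤ N → ∀ τ ∈ Set.Icc (t (k-1)) (t k),
      |τ * x' τ - (x (t k) - x (t (k-1))) / (1 - Real.exp (-ΔT))| ≤ C * ΔT := by
    intro k hk1 hkN τ hτ
    have hlt : t (k-1) < t k := hsmono (k-1) k (by omega)
    have hsubk := hsubIcc k hk1 hkN
    obtain ⟨σ, hσmem, hσ⟩ := exists_hasDerivAt_eq_slope x x' hlt (hxc.mono hsubk)
      (fun s hs => by
        have hs1 : a < s := lt_of_le_of_lt (hsubk ⟨le_refl _, hlt.le⟩).1 hs.1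
        have hs2 : s < b := lt_of_lt_of_le hs.2 (hsubk ⟨hlt.le, le_refl _⟩).2
        exact (hx' s ⟨hs1.le, hs2.le⟩).hasDerivAt (Icc_mem_nhds hs1 hs2))
    have hck : (x (t k) - x (t (k-1))) / (1 - Real.exp (-ΔT)) = x' σ * t k := by
      rw [hσ, htk_sub k hk1]
      have h1 : t k ≠ 0 := ne_of_gt (htpos k)
      field_simp
    rw [hck]
    have hτab := hsubk hτ
    have hσab := hsubk (Set.Ioo_subset_Icc_self hσmem)
    have h1 := hφ τ σ hτab hσab
    have h2 := hMx' σ hσab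
    have h4 : |τ - σ| ≤ b * ΔT := by
      refine le_trans ?_ (hdiff_le k hk1 hkN)
      rw [abs_sub_le_iff]
      constructor <;> [skip; skip] <;>
        · have := hτ.1; have := hτ.2; have := hσmem.1.le; have := hσmem.2.le; linarith
    have h5 : |σ - t k| ≤ b * ΔT := by
      refine le_trans ?_ (hdiff_le k hk1 hkN)
      rw [abs_sub_le_iff]
      constructor <;>
        · have := hσmem.1.le; have := hσmem.2.le; have h6 := hlt.le; linarith
    have e1 : τ * x' τ - x' σ * t k = (τ * x' τ - σ * x' σ) + x' σ * (σ - t k) := by ring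
    rw [e1]
    refine le_trans (abs_add_le _ _) ?_
    have h6 : |x' σ * (σ - t k)| ≤ M * (b * ΔT) := by
      rw [abs_mul]
      exact mul_le_mul h2 h5 (abs_nonneg _) hM0
    have h7 : |τ * x' τ - σ * x' σ| ≤ (M + b * M) * (b * ΔT) :=
      le_trans h1 (mul_le_mul_of_nonneg_left h4 (by positivity))
    refine le_trans (add_le_add h7 h6) (le_of_eq ?_)
    rw [hCdef]; ring
  -- value of the elementary integrals
  have hGamma2 : Real.Gamma (2 - α) = (1 - α) * Real.Gamma (1 - α) := by
    rw [show (2:ℝ) - α = (1 - α) + 1 by ring, Real.Gamma_add_one (ne_of_gt h1α)]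
  have hIk : ∀ k : ℕ, 1 ≤ k → k ≤ N →
      (∫ τ in (t (k-1))..(t k), Real.log (t N / τ) ^ (-α) * τ⁻¹)
        = ΔT ^ (1-α) * ω (N - k + 1) / (1 - α) := by
    intro k hk1 hkN
    have hlt : t (k-1) < t k := hsmono (k-1) k (by omega)
    have hta : a ≤ t (k-1) := by
      rw [← ht0]; exact hmono 0 (k-1) (Nat.zero_le _)
    have h := had_ftc ha haT hα0 hα1 hta hlt (hmono k N hkN)
    rw [h, hlogT (k-1) N, hlogT k N]
    have hcast : ((k - 1 : ℕ) : ℝ) = (k : ℝ) - 1 := by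
      rw [Nat.cast_sub hk1]; norm_num
    have hcast2 : ((N - k + 1 : ℕ) : ℝ) = (N : ℝ) - k + 1 := by
      rw [Nat.cast_add, Nat.cast_sub hkN]; norm_num
    rw [hωdef, hcast, hcast2]
    have hNk1 : (0:ℝ) ≤ (N : ℝ) - k + 1 := by
      have : (k:ℝ) ≤ N := by exact_mod_cast hkN
      linarith
    have hNk : (0:ℝ) ≤ (N : ℝ) - k := by
      have : (k:ℝ) ≤ N := by exact_mod_cast hkN
      linarith
    rw [show ((N:ℝ) - ((k:ℝ) - 1)) * ΔT = ((N:ℝ) - k + 1) * ΔT by ring]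
    rw [Real.mul_rpow hNk1 hΔT.le, Real.mul_rpow hNk hΔT.le,
      show (N:ℝ) - (k:ℝ) + 1 - 1 = (N:ℝ) - (k:ℝ) by ring]
    ring
  -- rewriting the scheme
  have hsum : ψ * ∑ k ∈ Finset.Icc 1 N,
        ω (N - k + 1) * ((x (t k) - x (t (k - 1))) / Real.exp (k * ΔT)) * t k
      = (1 / Real.Gamma (1-α)) * ∑ k ∈ Finset.Icc 1 N,
          ((x (t k) - x (t (k-1))) / (1 - Real.exp (-ΔT)))
            * ∫ τ in (t (k-1))..(t k), Real.log (t N / τ) ^ (-α) * τ⁻¹ := by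
    rw [Finset.mul_sum, Finset.mul_sum]
    apply Finset.sum_congr rfl
    intro k hk
    obtain ⟨hk1, hkN⟩ := Finset.mem_Icc.1 hk
    rw [hIk k hk1 hkN, hψdef, hGamma2, ht k]
    have hE : Real.exp ((k:ℝ) * ΔT) ≠ 0 := Real.exp_ne_zero _
    have hΓne : Real.Gamma (1-α) ≠ 0 := ne_of_gt hΓ
    have h1αne : (1:ℝ) - α ≠ 0 := ne_of_gt h1α
    field_simp
  -- splitting the integral
  have hadj : ∀ k, k < N → IntervalIntegrable
      (fun τ => Real.log (t N / τ) ^ (-α) * x' τ) volume (t k) (t (k+1)) := by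
    intro k hk
    apply hIntAll.mono_set
    have h := huIcc (k+1) (by omega) (by omega)
    simpa using h
  have hsplit : (∫ τ in a..(t N), Real.log (t N / τ) ^ (-α) * x' τ)
      = ∑ k ∈ Finset.Icc 1 N, ∫ τ in (t (k-1))..(t k), Real.log (t N / τ) ^ (-α) * x' τ := by
    rw [sum_Icc_one_eq_range]
    have h := intervalIntegral.sum_integral_adjacent_intervals (μ := volume)
      (f := fun τ => Real.log (t N / τ) ^ (-α) * x' τ) hadj
    rw [ht0] at h
    rw [← h]
    apply Finset.sum_congr rfl
    intro i hi
    simp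
  -- per-interval integrability
  have hJint : ∀ k : ℕ, 1 ≤ k → k ≤ N → IntervalIntegrable
      (fun τ => Real.log (t N / τ) ^ (-α) * x' τ) volume (t (k-1)) (t k) :=
    fun k hk1 hkN => hIntAll.mono_set (huIcc k hk1 hkN)
  have hIint : ∀ k : ℕ, 1 ≤ k → k ≤ N → IntervalIntegrable
      (fun τ => Real.log (t N / τ) ^ (-α) * τ⁻¹) volume (t (k-1)) (t k) :=
    fun k hk1 hkN => hIntInv.mono_set (huIcc k hk1 hkN)
  -- per-interval error estimate
  have hper : ∀ k ∈ Finset.Icc 1 N,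
      |(∫ τ in (t (k-1))..(t k), Real.log (t N / τ) ^ (-α) * x' τ)
        - (x (t k) - x (t (k-1))) / (1 - Real.exp (-ΔT))
          * ∫ τ in (t (k-1))..(t k), Real.log (t N / τ) ^ (-α) * τ⁻¹|
      ≤ C * ΔT * ∫ τ in (t (k-1))..(t k), Real.log (t N / τ) ^ (-α) * τ⁻¹ := by
    intro k hk
    obtain ⟨hk1, hkN⟩ := Finset.mem_Icc.1 hk
    have hlt : t (k-1) < t k := hsmono (k-1) k (by omega)
    have hJ := hJint k hk1 hkN
    have hI := hIint k hk1 hkN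
    set ck : ℝ := (x (t k) - x (t (k-1))) / (1 - Real.exp (-ΔT)) with hckdef
    rw [← intervalIntegral.integral_const_mul,
      ← intervalIntegral.integral_sub hJ (hI.const_mul ck)]
    refine le_trans (intervalIntegral.abs_integral_le_integral_abs hlt.le) ?_
    rw [← intervalIntegral.integral_const_mul]
    apply intervalIntegral.integral_mono_on hlt.le
      ((hJ.sub (hI.const_mul ck)).abs) (hI.const_mul (C * ΔT))
    intro τ hτ
    have hτa : a ≤ τ := ((hsubIcc k hk1 hkN) hτ).1
    have hτ0 : 0 < τ := lt_of_lt_of_le ha hτa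
    have hτT : τ ≤ t N := le_trans hτ.2 (hmono k N hkN)
    have hlognn : 0 ≤ Real.log (t N / τ) := Real.log_nonneg ((one_le_div hτ0).2 hτT)
    have hfnn : 0 ≤ Real.log (t N / τ) ^ (-α) := Real.rpow_nonneg hlognn _
    have hkey' := hkey k hk1 hkN τ hτ
    rw [← hckdef] at hkey'
    have he : Real.log (t N / τ) ^ (-α) * x' τ - ck * (Real.log (t N / τ) ^ (-α) * τ⁻¹)
        = (Real.log (t N / τ) ^ (-α) * τ⁻¹) * (τ * x' τ - ck) := by
      field_simp
    rw [he, abs_mul, abs_of_nonneg (mul_nonneg hfnn (inv_nonneg.2 hτ0.le))]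
    calc Real.log (t N / τ) ^ (-α) * τ⁻¹ * |τ * x' τ - ck|
        ≤ Real.log (t N / τ) ^ (-α) * τ⁻¹ * (C * ΔT) :=
          mul_le_mul_of_nonneg_left hkey' (mul_nonneg hfnn (inv_nonneg.2 hτ0.le))
      _ = C * ΔT * (Real.log (t N / τ) ^ (-α) * τ⁻¹) := by ring
  -- telescoping sum
  have htel : ∑ k ∈ Finset.Icc 1 N, ω (N - k + 1) = (N:ℝ) ^ (1-α) := by
    rw [sum_Icc_one_eq_range]
    rw [Finset.sum_congr rfl (show ∀ i ∈ Finset.range N, ω (N - (i+1) + 1) = ω (N - i) by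
      intro i hi; congr 1; have := Finset.mem_range.1 hi; omega)]
    have h2 := Finset.sum_range_reflect (fun j => ω (j+1)) N
    rw [Finset.sum_congr rfl (show ∀ j ∈ Finset.range N, ω (N - 1 - j + 1) = ω (N - j) by
      intro j hj; congr 1; have := Finset.mem_range.1 hj; omega)] at h2
    rw [h2, Finset.sum_congr rfl (show ∀ j ∈ Finset.range N,
        ω (j+1) = ((j+1 : ℕ):ℝ) ^ (1-α) - ((j : ℕ):ℝ) ^ (1-α) by
      intro j hj
      rw [hωdef]
      push_cast
      rw [show (j:ℝ) + 1 - 1 = (j:ℝ) by ring]),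
      Finset.sum_range_sub (fun j => ((j : ℕ):ℝ) ^ (1-α)) N]
    norm_num [Real.zero_rpow (ne_of_gt h1α)]
  have hIsum : ∑ k ∈ Finset.Icc 1 N,
      (∫ τ in (t (k-1))..(t k), Real.log (t N / τ) ^ (-α) * τ⁻¹)
      = ΔT ^ (1-α) * (N:ℝ) ^ (1-α) / (1 - α) := by
    calc ∑ k ∈ Finset.Icc 1 N,
        (∫ τ in (t (k-1))..(t k), Real.log (t N / τ) ^ (-α) * τ⁻¹)
        = ∑ k ∈ Finset.Icc 1 N, ΔT ^ (1-α) / (1-α) * ω (N - k + 1) :=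
          Finset.sum_congr rfl (fun k hk => by
            rw [hIk k (Finset.mem_Icc.1 hk).1 (Finset.mem_Icc.1 hk).2]; ring)
      _ = ΔT ^ (1-α) / (1-α) * ∑ k ∈ Finset.Icc 1 N, ω (N - k + 1) :=
          (Finset.mul_sum _ _ _).symm
      _ = ΔT ^ (1-α) * (N:ℝ) ^ (1-α) / (1 - α) := by rw [htel]; ring
  -- final assembly
  have hfinal : D - x a / Real.Gamma (1 - α) * Real.log (t N / a) ^ (-α)
      - ψ * ∑ k ∈ Finset.Icc 1 N,
          ω (N - k + 1) * ((x (t k) - x (t (k - 1))) / Real.exp (k * ΔT)) * t k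
      = (1 / Real.Gamma (1-α)) * ∑ k ∈ Finset.Icc 1 N,
          ((∫ τ in (t (k-1))..(t k), Real.log (t N / τ) ^ (-α) * x' τ)
            - (x (t k) - x (t (k-1))) / (1 - Real.exp (-ΔT))
              * ∫ τ in (t (k-1))..(t k), Real.log (t N / τ) ^ (-α) * τ⁻¹) := by
    rw [hDdef, hsum, hsplit, Finset.sum_sub_distrib]
    ring
  rw [hfinal, abs_mul, abs_of_pos (show (0:ℝ) < 1 / Real.Gamma (1-α) by positivity)]
  have hNT : ΔT * (N:ℝ) ≤ L := by
    rw [mul_comm, ← hnΔT]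
    exact mul_le_mul_of_nonneg_right (by exact_mod_cast hNn) hΔT.le
  have hpow : ΔT ^ (1-α) * (N:ℝ) ^ (1-α) ≤ L ^ (1-α) := by
    rw [← Real.mul_rpow hΔT.le (Nat.cast_nonneg N)]
    exact Real.rpow_le_rpow (by positivity) hNT h1α.le
  calc (1 / Real.Gamma (1-α)) * |∑ k ∈ Finset.Icc 1 N,
          ((∫ τ in (t (k-1))..(t k), Real.log (t N / τ) ^ (-α) * x' τ)
            - (x (t k) - x (t (k-1))) / (1 - Real.exp (-ΔT))
              * ∫ τ in (t (k-1))..(t k), Real.log (t N / τ) ^ (-α) * τ⁻¹)|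
      ≤ (1 / Real.Gamma (1-α)) * (C * ΔT * (ΔT ^ (1-α) * (N:ℝ) ^ (1-α) / (1 - α))) := by
        apply mul_le_mul_of_nonneg_left _ (by positivity)
        calc |∑ k ∈ Finset.Icc 1 N,
            ((∫ τ in (t (k-1))..(t k), Real.log (t N / τ) ^ (-α) * x' τ)
              - (x (t k) - x (t (k-1))) / (1 - Real.exp (-ΔT))
                * ∫ τ in (t (k-1))..(t k), Real.log (t N / τ) ^ (-α) * τ⁻¹)|
            ≤ ∑ k ∈ Finset.Icc 1 N,
              |(∫ τ in (t (k-1))..(t k), Real.log (t N / τ) ^ (-α) * x' τ)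
                - (x (t k) - x (t (k-1))) / (1 - Real.exp (-ΔT))
                  * ∫ τ in (t (k-1))..(t k), Real.log (t N / τ) ^ (-α) * τ⁻¹| :=
              Finset.abs_sum_le_sum_abs _ _
          _ ≤ ∑ k ∈ Finset.Icc 1 N,
              C * ΔT * ∫ τ in (t (k-1))..(t k), Real.log (t N / τ) ^ (-α) * τ⁻¹ :=
              Finset.sum_le_sum hper
          _ = C * ΔT * ∑ k ∈ Finset.Icc 1 N,
              ∫ τ in (t (k-1))..(t k), Real.log (t N / τ) ^ (-α) * τ⁻¹ := by
              rw [Finset.mul_sum]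
          _ = C * ΔT * (ΔT ^ (1-α) * (N:ℝ) ^ (1-α) / (1 - α)) := by rw [hIsum]
    _ = C * (ΔT ^ (1-α) * (N:ℝ) ^ (1-α)) / ((1-α) * Real.Gamma (1-α)) * ΔT := by
        field_simp
    _ ≤ K * ΔT := by
        rw [hKdef]
        apply mul_le_mul_of_nonneg_right _ hΔT.le
        gcongr
    _ < ε := hfin
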